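/- The honest device always satisfies the Bell-round winning condition: for all bits s^A, s^B, h^A, h^B, a, b ∈ {0,1}, let w = (X^{h^A}·Z^{h^B} ⊗ X^{h^A}·Z^{h^B}) · (I ⊗ H) · CZ · (|+_{s^A}⟩ ⊗ |+_{s^B}⟩) ∈ ℂ²⊗ℂ². Then: (i) the squared magnitude of ⟨e_a ⊗ e_b, w⟩ equals 1/2 if a ⊕ b = s^B and 0 otherwise; and (ii) the squared magnitude of ⟨H·e_a ⊗ H·e_b, w⟩ equals 1/2 if a ⊕ b = s^A and 0 otherwise (⊕ denoting XOR). In particular, these outcome distributions are independent of the correction bits h^A, h^B, and when both qubits are measured in the computational basis the outcomes satisfy a ⊕ b = s^B with probability 1, while in the Hadamard basis they satisfy a ⊕ b = s^A with probability 1. -/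

import Mathlib

open Matrix Kronecker

noncomputable section

/-- Standard basis of ℂ². -/
def e (i : Fin 2) : Fin 2 → ℂ := fun j => if j = i then 1 else 0

/-- Kronecker (tensor) product of two vectors in ℂ². -/
def tens (v w : Fin 2 → ℂ) : Fin 2 × Fin 2 → ℂ := fun p => v p.1 * w p.2

/-- Pauli X. -/
def X : Matrix (Fin 2) (Fin 2) ℂ := !![0, 1; 1, 0]

/-- Pauli Z. -/
def Z : Matrix (Fin 2) (Fin 2) ℂ := !![1, 0; 0, -1]

/-- Hadamard gate. -/
def Hgate : Matrix (Fin 2) (Fin 2) ℂ := (Real.sqrt 2 : ℂ)⁻¹ • !![1, 1; 1, -1]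

/-- Controlled-Z gate: diag(1,1,1,-1). -/
def CZ : Matrix (Fin 2 × Fin 2) (Fin 2 × Fin 2) ℂ :=
  Matrix.diagonal fun p => (-1 : ℂ) ^ ((p.1 : ℕ) * (p.2 : ℕ))

/-- The EPR pair (e₀⊗e₀ + e₁⊗e₁)/√2. -/
def EPR : Fin 2 × Fin 2 → ℂ := (Real.sqrt 2 : ℂ)⁻¹ • (tens (e 0) (e 0) + tens (e 1) (e 1))

/-- The Bell state φ^(s,t) = (Z^s X^t ⊗ I) EPR. -/
def bell (s t : Fin 2) : Fin 2 × Fin 2 → ℂ :=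
  ((Z ^ (s : ℕ) * X ^ (t : ℕ)) ⊗ₖ (1 : Matrix (Fin 2) (Fin 2) ℂ)).mulVec EPR

/-- Hadamard-basis state |+_s⟩. -/
def plus (s : Fin 2) : Fin 2 → ℂ :=
  (Real.sqrt 2 : ℂ)⁻¹ • (e 0 + ((-1 : ℂ) ^ (s : ℕ)) • e 1)

local notation "r" => (Complex.ofReal (Real.sqrt 2))⁻¹

lemma hrr : r * r = 2⁻¹ := by
  rw [← mul_inv]
  norm_num [← Complex.ofReal_mul, ← Real.sqrt_mul_self (le_of_lt two_pos)]

lemma hr3 : ((Real.sqrt 2 : ℂ) ^ 3)⁻¹ * 2 = r := by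
  have h2 : (Real.sqrt 2 : ℂ) * (Real.sqrt 2 : ℂ) = 2 := by
    norm_num [← Complex.ofReal_mul, Real.mul_self_sqrt (le_of_lt two_pos)]
  rw [pow_succ, pow_two, h2, mul_inv]; ring

lemma X00 : X 0 0 = 0 := rfl
lemma X01 : X 0 1 = 1 := rfl
lemma X10 : X 1 0 = 1 := rfl
lemma X11 : X 1 1 = 0 := rfl
lemma Z00 : Z 0 0 = 1 := rfl
lemma Z01 : Z 0 1 = 0 := rfl
lemma Z10 : Z 1 0 = 0 := rfl
lemma Z11 : Z 1 1 = -1 := rfl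
lemma H00 : Hgate 0 0 = r := by simp [Hgate]
lemma H01 : Hgate 0 1 = r := by simp [Hgate]
lemma H10 : Hgate 1 0 = r := by simp [Hgate]
lemma H11 : Hgate 1 1 = -r := by simp [Hgate]
lemma plus0 (j : Fin 2) : plus 0 j = r := by fin_cases j <;> simp [plus, e]
lemma plus1_0 : plus 1 0 = r := by simp [plus, e]
lemma plus1_1 : plus 1 1 = -r := by simp [plus, e]
lemma CZa (p q : Fin 2 × Fin 2) : CZ p q = if q = p then (-1:ℂ)^((p.1:ℕ)*(p.2:ℕ)) else 0 := by
  rw [CZ, Matrix.diagonal_apply]; exact if_congr eq_comm rfl rfl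
lemma mulVec_apply (M : Matrix (Fin 2 × Fin 2) (Fin 2 × Fin 2) ℂ) (v : Fin 2 × Fin 2 → ℂ)
    (p : Fin 2 × Fin 2) :
    M.mulVec v p = M p (0,0) * v (0,0) + M p (0,1) * v (0,1) + M p (1,0) * v (1,0)
      + M p (1,1) * v (1,1) := by
  simp [Matrix.mulVec, dotProduct, Fintype.sum_prod_type, Fin.sum_univ_two]; ring
lemma kron_apply (A B : Matrix (Fin 2) (Fin 2) ℂ) (p q : Fin 2 × Fin 2) :
    (A ⊗ₖ B) p q = A p.1 q.1 * B p.2 q.2 := rfl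
lemma tens_apply (v w : Fin 2 → ℂ) (p : Fin 2 × Fin 2) : tens v w p = v p.1 * w p.2 := rfl

set_option maxHeartbeats 1000000 in
lemma w_eq (sA sB hA hB : Fin 2) :
    ((X ^ (hA : ℕ) * Z ^ (hB : ℕ)) ⊗ₖ (X ^ (hA : ℕ) * Z ^ (hB : ℕ))).mulVec
        (((1 : Matrix (Fin 2) (Fin 2) ℂ) ⊗ₖ Hgate).mulVec
          (CZ.mulVec (tens (plus sA) (plus sB)))) =
    ((-1 : ℂ) ^ ((sA : ℕ) * (hA : ℕ) + (hB : ℕ) * (sB : ℕ))) •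
      fun p : Fin 2 × Fin 2 =>
        r * ((-1 : ℂ) ^ ((sA : ℕ) * (p.1 : ℕ)) *
          (if p.2 = p.1 + sB then 1 else 0)) := by
  funext p
  obtain ⟨p1, p2⟩ := p
  fin_cases sA <;> fin_cases sB <;> fin_cases hA <;> fin_cases hB <;> fin_cases p1 <;> fin_cases p2 <;>
    · simp only [Fin.mk_zero, Fin.mk_one, pow_one, pow_zero, Matrix.one_mul, Matrix.mul_one,
        mulVec_apply, kron_apply, tens_apply, CZa, Matrix.mul_apply, Fin.sum_univ_two,
        Matrix.one_apply, Pi.smul_apply, smul_eq_mul, X00, X01, X10, X11, Z00, Z01, Z10, Z11,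
        H00, H01, H10, H11, plus0, plus1_0, plus1_1, Prod.mk.injEq]
      try simp only [X00, X01, X10, X11, Z00, Z01, Z10, Z11, H00, H01, H10, H11, plus0,
        plus1_0, plus1_1, Prod.mk.injEq]
      try norm_num [Fin.ext_iff, Prod.ext_iff]
      try ring_nf
      try simp [hrr, hr3, pow_succ, mul_assoc]
      try ring_nf
      try simp [hrr, hr3, pow_succ, mul_assoc]

lemma dot4 (u v : Fin 2 × Fin 2 → ℂ) :
    star u ⬝ᵥ v = star (u (0,0)) * v (0,0) + star (u (0,1)) * v (0,1)
      + star (u (1,0)) * v (1,0) + star (u (1,1)) * v (1,1) := by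
  simp [dotProduct, Fintype.sum_prod_type, Fin.sum_univ_two]; ring

lemma Hea (a x : Fin 2) : Hgate.mulVec (e a) x = r * (-1 : ℂ) ^ ((a : ℕ) * (x : ℕ)) := by
  fin_cases a <;> fin_cases x <;>
    simp [Hgate, e, Matrix.mulVec, dotProduct, Fin.sum_univ_two] <;> ring

lemma habs : ‖r‖ ^ 2 = 1 / 2 := by
  rw [norm_inv, Complex.norm_real, Real.norm_eq_abs, abs_of_nonneg (Real.sqrt_nonneg 2)]
  rw [inv_pow, Real.sq_sqrt (le_of_lt two_pos)]
  norm_num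

lemma h3cube : Real.sqrt 2 ^ 3 = 2 * Real.sqrt 2 := by
  rw [pow_succ, Real.sq_sqrt (le_of_lt two_pos)]

lemma habs3 : ((|Real.sqrt 2| ^ 3)⁻¹ * 2) ^ 2 = 1 / 2 := by
  have h0 : Real.sqrt 2 ≠ 0 := by positivity
  rw [abs_of_nonneg (Real.sqrt_nonneg 2), h3cube,
    show (2 * Real.sqrt 2)⁻¹ * 2 = (Real.sqrt 2)⁻¹ by field_simp,
    inv_pow, Real.sq_sqrt (le_of_lt two_pos)]
  norm_num

lemma habs4 : ‖((Real.sqrt 2 : ℂ) ^ 3)⁻¹ + ((Real.sqrt 2 : ℂ) ^ 3)⁻¹‖ ^ 2 = 1 / 2 := by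
  rw [← two_mul, ← Complex.ofReal_pow, ← Complex.ofReal_inv, ← Complex.ofReal_ofNat,
    ← Complex.ofReal_mul, Complex.norm_real, Real.norm_eq_abs]
  have h0 : Real.sqrt 2 ≠ 0 := by positivity
  rw [abs_of_nonneg (by positivity), h3cube,
    show (2:ℝ) * (2 * Real.sqrt 2)⁻¹ = (Real.sqrt 2)⁻¹ by field_simp,
    inv_pow, Real.sq_sqrt (le_of_lt two_pos)]
  norm_num

lemma habs5 : ‖-((Real.sqrt 2 : ℂ) ^ 3)⁻¹ + -((Real.sqrt 2 : ℂ) ^ 3)⁻¹‖ ^ 2 = 1 / 2 := by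
  rw [← neg_add, norm_neg]
  exact habs4

set_option maxHeartbeats 1000000 in
/-- the honest device always satisfies the Bell-round winning
condition, independently of the teleportation correction bits. -/
theorem honest_device_wins_bell_round (sA sB hA hB a b : Fin 2) :
    (‖star (tens (e a) (e b)) ⬝ᵥ
        (((X ^ (hA : ℕ) * Z ^ (hB : ℕ)) ⊗ₖ (X ^ (hA : ℕ) * Z ^ (hB : ℕ))).mulVec
          (((1 : Matrix (Fin 2) (Fin 2) ℂ) ⊗ₖ Hgate).mulVec
            (CZ.mulVec (tens (plus sA) (plus sB)))))‖ ^ 2 =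
      if a + b = sB then (1 / 2 : ℝ) else 0) ∧
    (‖star (tens (Hgate.mulVec (e a)) (Hgate.mulVec (e b))) ⬝ᵥ
        (((X ^ (hA : ℕ) * Z ^ (hB : ℕ)) ⊗ₖ (X ^ (hA : ℕ) * Z ^ (hB : ℕ))).mulVec
          (((1 : Matrix (Fin 2) (Fin 2) ℂ) ⊗ₖ Hgate).mulVec
            (CZ.mulVec (tens (plus sA) (plus sB)))))‖ ^ 2 =
      if a + b = sA then (1 / 2 : ℝ) else 0) := by
  rw [w_eq]
  constructor <;>
  · rw [dotProduct_smul, smul_eq_mul]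
    rw [norm_mul, norm_pow, norm_neg, norm_one, one_pow, one_mul]
    rw [dot4]
    fin_cases a <;> fin_cases b <;> fin_cases sA <;> fin_cases sB <;>
      · simp only [tens_apply, Hea, e, Pi.star_apply,
          show (1+1 : Fin 2) = 0 from rfl, show (0+1 : Fin 2) = 1 from rfl,
          show (1+0 : Fin 2) = 1 from rfl, show (0+0 : Fin 2) = 0 from rfl]
        norm_num [Fin.ext_iff, Prod.ext_iff, _root_.map_mul, map_pow, Complex.star_def,
          Complex.conj_ofReal, map_inv₀, -Fin.val_eq_zero_iff]
        try ring_nf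
        try simp [norm_mul, norm_pow, habs, _root_.map_mul, map_pow, map_inv₀]
        try norm_num [habs, habs3, habs4, habs5]
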